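/- arXiv:1512.08732 — 4 statements merged into one kernel-verified Lean document; each statement's English description precedes it below -/
import Mathlib

section
/- Let C > 0, m ∈ ℕ with m ≥ 1, r = e^{−C/m}, and θ ∈ ℝ. Then |∑_{t=1}^{m} r^t e^{itθ}/t + ln(1 − r·e^{iθ})| < ∫_C^∞ e^{−x}/x dx, where ln denotes the principal branch of the complex logarithm. -/
open MeasureTheory Real

lemma auxFcont {a b : ℝ} (ha : 0 < a) :
    ContinuousOn (fun u : ℝ => Real.exp (-u) / u) (Set.Icc a b) := by
  apply ContinuousOn.div
  · exact (Real.continuous_exp.comp continuous_neg).continuousOn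
  · exact continuousOn_id
  · intro x hx; exact (lt_of_lt_of_le ha hx.1).ne'

lemma auxlt {a b : ℝ} (ha : 0 < a) (hab : a < b) :
    Real.exp (-b) / b * (b - a) < ∫ u in a..b, Real.exp (-u) / u := by
  have hb : 0 < b := ha.trans hab
  have h0 : Real.exp (-b) / b * (b - a) = ∫ u in a..b, Real.exp (-b) / b := by
    rw [intervalIntegral.integral_const, smul_eq_mul, mul_comm]
  rw [h0]
  refine intervalIntegral.integral_lt_integral_of_continuousOn_of_le_of_exists_lt hab
    continuousOn_const (auxFcont ha) ?_ ?_
  · intro x hx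
    have hx0 : 0 < x := ha.trans hx.1
    exact div_le_div₀ (Real.exp_pos _).le (Real.exp_le_exp.2 (by linarith [hx.2])) hx0 hx.2
  · refine ⟨a, Set.left_mem_Icc.2 hab.le, ?_⟩
    have h1 : Real.exp (-b) < Real.exp (-a) := Real.exp_lt_exp.2 (by linarith)
    rw [div_lt_div_iff₀ hb ha]
    nlinarith [Real.exp_pos (-b), Real.exp_pos (-a)]

lemma auxInt {c : ℝ} (hc : 0 < c) :
    IntegrableOn (fun u : ℝ => Real.exp (-u) / u) (Set.Ioi c) := by
  have hmeas : Measurable (fun u : ℝ => Real.exp (-u) / u) :=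
    (Real.measurable_exp.comp measurable_neg).div measurable_id
  refine Integrable.mono' ((exp_neg_integrableOn_Ioi c one_pos).div_const c)
    hmeas.aestronglyMeasurable ?_
  filter_upwards [ae_restrict_mem measurableSet_Ioi] with x hx
  have hx0 : 0 < x := hc.trans hx
  rw [Real.norm_eq_abs, abs_of_nonneg (by positivity), neg_one_mul]
  exact div_le_div₀ (Real.exp_pos _).le le_rfl hc hx.le

lemma auxSplit {c b : ℝ} (hc : 0 < c) (hcb : c ≤ b) :
    (∫ u in Set.Ioi c, Real.exp (-u) / u) =
      (∫ u in c..b, Real.exp (-u) / u) + ∫ u in Set.Ioi b, Real.exp (-u) / u := by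
  rw [intervalIntegral.integral_of_le hcb, ← setIntegral_union (Set.Ioc_disjoint_Ioi le_rfl)
    measurableSet_Ioi ((auxInt hc).mono_set Set.Ioc_subset_Ioi_self)
    ((auxInt hc).mono_set (Set.Ioi_subset_Ioi hcb)), Set.Ioc_union_Ioi_eq_Ioi hcb]

lemma auxTerm {C : ℝ} (hC : 0 < C) {m : ℕ} (hm : 1 ≤ m) {t : ℕ} (ht : 2 ≤ t) :
    Real.exp (-C/m) ^ t / t < ∫ u in (C*((t:ℝ)-1)/m)..(C*(t:ℝ)/m), Real.exp (-u) / u := by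
  have hm0 : (0:ℝ) < m := by exact_mod_cast hm
  have ht1 : (1:ℝ) ≤ (t:ℝ) - 1 := by
    have : (2:ℝ) ≤ t := by exact_mod_cast ht
    linarith
  have ha : 0 < C*((t:ℝ)-1)/m := by positivity
  have hab : C*((t:ℝ)-1)/m < C*(t:ℝ)/m := by
    gcongr
    linarith
  have ht0 : (0:ℝ) < t := by linarith
  have hpow : Real.exp (-C/m) ^ t = Real.exp (-(C*(t:ℝ)/m)) := by
    rw [← Real.exp_nat_mul]
    congr 1
    ring
  calc Real.exp (-C/m) ^ t / t
      = Real.exp (-(C*(t:ℝ)/m)) / (C*(t:ℝ)/m) * (C*(t:ℝ)/m - C*((t:ℝ)-1)/m) := by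
        rw [hpow]; field_simp; ring
    _ < _ := auxlt ha hab

lemma auxTail {C : ℝ} (hC : 0 < C) {m : ℕ} (hm : 1 ≤ m) :
    ∑' k : ℕ, Real.exp (-C/m) ^ (k + (m+1)) / ((k + (m+1) : ℕ) : ℝ)
      < ∫ u in Set.Ioi C, Real.exp (-u) / u := by
  have hm0 : (0:ℝ) < m := by exact_mod_cast hm
  set r : ℝ := Real.exp (-C/m) with hr
  have hr0 : 0 < r := Real.exp_pos _
  have hr1 : r < 1 := Real.exp_lt_one_iff.2 (by
    have : 0 < C/m := by positivity
    rw [neg_div]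
    linarith)
  set g : ℕ → ℝ := fun k => r ^ (k + (m+1)) / ((k + (m+1) : ℕ) : ℝ) with hg
  have hgnn : ∀ k, 0 ≤ g k := fun k => by positivity
  have hgle : ∀ k, g k ≤ r ^ k * r ^ (m+1) := by
    intro k
    rw [hg, ← pow_add]
    have h1 : (1:ℝ) ≤ ((k + (m+1) : ℕ) : ℝ) := by exact_mod_cast Nat.le_add_left 1 (k + m)
    calc r ^ (k + (m+1)) / ((k + (m+1) : ℕ) : ℝ) ≤ r ^ (k + (m+1)) / 1 := by
          gcongr
      _ = r ^ (k + (m+1)) := div_one _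
  have hgsum : Summable g :=
    Summable.of_nonneg_of_le hgnn hgle ((summable_geometric_of_lt_one hr0.le hr1).mul_right _)
  -- endpoints
  set b : ℝ := C * ((m:ℝ)+1) / m with hb
  have hCb : C ≤ b := by
    rw [hb]
    rw [le_div_iff₀ hm0]
    nlinarith
  -- first term
  have hfirst : g 0 < ∫ u in C..b, Real.exp (-u) / u := by
    have h := auxTerm hC hm (t := m+1) (by omega)
    have e1 : C * (((m+1:ℕ):ℝ) - 1) / m = C := by
      push_cast; field_simp; ring
    have e2 : C * ((m+1:ℕ):ℝ) / m = b := by push_cast; rw [hb]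
    rw [e1, e2] at h
    simpa [hg] using h
  -- rest
  have hrest : ∑' k : ℕ, g (k + 1) ≤ ∫ u in Set.Ioi b, Real.exp (-u) / u := by
    have hb0 : 0 < b := lt_of_lt_of_le hC hCb
    set a : ℕ → ℝ := fun k => C * ((m:ℝ) + 1 + k) / m with ha
    have ha0 : a 0 = b := by rw [ha, hb]; norm_num
    have hapos : ∀ k, 0 < a k := fun k => by rw [ha]; positivity
    have hamono : ∀ k, a k ≤ a (k+1) := by
      intro k
      rw [ha]
      refine div_le_div₀ (by positivity) ?_ hm0 le_rfl
      have : ((k:ℝ)) ≤ ((k:ℝ)+1) := by linarith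
      push_cast
      nlinarith
    have hint : ∀ k : ℕ, IntervalIntegrable (fun u => Real.exp (-u) / u) volume (a k) (a (k+1)) :=
      fun k => ((Set.uIcc_of_le (hamono k)) ▸ auxFcont (hapos k)).intervalIntegrable
    have haN : ∀ n : ℕ, a 0 ≤ a n := by
      intro n
      rw [ha]
      refine div_le_div₀ (by positivity) ?_ hm0 le_rfl
      have : (0:ℝ) ≤ n := Nat.cast_nonneg n
      push_cast
      nlinarith
    have hterm : ∀ k : ℕ, g (k+1) ≤ ∫ u in a k..a (k+1), Real.exp (-u) / u := by
      intro k
      have h := (auxTerm hC hm (t := k + (m+1) + 1) (by omega)).le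
      have e1 : C * (((k + (m+1) + 1 : ℕ):ℝ) - 1) / m = a k := by
        rw [ha]; push_cast; ring_nf
      have e2 : C * ((k + (m+1) + 1 : ℕ):ℝ) / m = a (k+1) := by
        rw [ha]; push_cast; ring_nf
      rw [e1, e2] at h
      have e3 : (k+1) + (m+1) = k + (m+1) + 1 := by omega
      rw [hg]
      simpa [e3] using h
    refine Real.tsum_le_of_sum_range_le (fun n => hgnn _) fun N => ?_
    calc ∑ k ∈ Finset.range N, g (k+1)
        ≤ ∑ k ∈ Finset.range N, ∫ u in a k..a (k+1), Real.exp (-u) / u :=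
          Finset.sum_le_sum fun k _ => hterm k
      _ = ∫ u in (a 0)..(a N), Real.exp (-u) / u :=
          intervalIntegral.sum_integral_adjacent_intervals fun k _ => hint k
      _ ≤ ∫ u in Set.Ioi b, Real.exp (-u) / u := by
          rw [intervalIntegral.integral_of_le (haN N), ← ha0]
          refine setIntegral_mono_set ((auxInt hb0).mono_set (by rw [ha0])) ?_
            (Set.Ioc_subset_Ioi_self.eventuallyLE)
          filter_upwards [ae_restrict_mem measurableSet_Ioi] with x hx
          have hx0 : 0 < a 0 := hapos 0
          have : 0 < x := hx0.trans hx
          positivity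
  calc ∑' k, g k = g 0 + ∑' k, g (k + 1) := hgsum.tsum_eq_zero_add
    _ < (∫ u in C..b, Real.exp (-u) / u) + ∫ u in Set.Ioi b, Real.exp (-u) / u :=
        add_lt_add_of_lt_of_le hfirst hrest
    _ = _ := (auxSplit hC hCb).symm

theorem stmt2 (C : ℝ) (hC : 0 < C) (m : ℕ) (hm : 1 ≤ m) (θ : ℝ) :
    ‖(∑ t ∈ Finset.Icc 1 m,
        ((Real.exp (-C/m) : ℂ))^t * Complex.exp (Complex.I * t * θ) / t
      + Complex.log (1 - (Real.exp (-C/m) : ℂ) * Complex.exp (Complex.I * θ)))‖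
    < ∫ x in Set.Ioi C, Real.exp (-x) / x := by
  have hm0 : (0:ℝ) < m := by exact_mod_cast hm
  set r : ℝ := Real.exp (-C/m) with hrdef
  have hr0 : 0 < r := Real.exp_pos _
  have hr1 : r < 1 := Real.exp_lt_one_iff.2 (by
    have : 0 < C/m := by positivity
    rw [neg_div]
    linarith)
  set z : ℂ := (r:ℂ) * Complex.exp (Complex.I * θ) with hzdef
  have hznorm : ‖z‖ = r := by
    rw [hzdef, norm_mul, Complex.norm_real, Real.norm_eq_abs, abs_of_pos hr0,
      Complex.norm_exp]
    simp [Complex.mul_re]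
  have hz : ‖z‖ < 1 := by rw [hznorm]; exact hr1
  have hsum : HasSum (fun n : ℕ => z ^ n / n) (-Complex.log (1 - z)) :=
    Complex.hasSum_taylorSeries_neg_log hz
  have hS : Summable (fun n : ℕ => z ^ n / n) := hsum.summable
  -- rewrite finite sum
  have hterm : ∀ t : ℕ, (r:ℂ)^t * Complex.exp (Complex.I * t * θ) / t = z^t / t := by
    intro t
    rw [hzdef, mul_pow, ← Complex.exp_nat_mul]
    congr 2
    push_cast
    ring
  have hIcc : ∑ t ∈ Finset.Icc 1 m, z^t / t = ∑ t ∈ Finset.range (m+1), z^t / t := by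
    rw [Finset.range_eq_Ico, Finset.sum_eq_sum_Ico_succ_bot (by omega)]
    simp [Finset.Ico_add_one_right_eq_Icc]
  have h2 := hS.sum_add_tsum_nat_add (m+1)
  rw [hsum.tsum_eq] at h2
  have hexpr : (∑ t ∈ Finset.Icc 1 m, (r:ℂ)^t * Complex.exp (Complex.I * t * θ) / t)
      + Complex.log (1 - z) = -∑' k : ℕ, z^(k+(m+1)) / (k+(m+1) : ℕ) := by
    have e : ∑ t ∈ Finset.Icc 1 m, (r:ℂ)^t * Complex.exp (Complex.I * t * θ) / t
        = ∑ t ∈ Finset.range (m+1), z^t / t := by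
      rw [← hIcc]
      exact Finset.sum_congr rfl fun t _ => hterm t
    rw [e]
    push_cast at h2 ⊢
    linear_combination h2
  rw [hexpr, norm_neg]
  -- summability of norms
  have hnorm : ∀ k : ℕ, ‖z^(k+(m+1)) / ((k+(m+1) : ℕ) : ℂ)‖ = r^(k+(m+1)) / ((k+(m+1) : ℕ) : ℝ) := by
    intro k
    rw [norm_div, norm_pow, hznorm, Complex.norm_natCast]
  have hgnn : ∀ k : ℕ, (0:ℝ) ≤ r ^ (k + (m+1)) / ((k + (m+1) : ℕ) : ℝ) := fun k => by positivity
  have hgle : ∀ k : ℕ, r ^ (k + (m+1)) / ((k + (m+1) : ℕ) : ℝ) ≤ r ^ k * r ^ (m+1) := by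
    intro k
    rw [← pow_add]
    have h1 : (1:ℝ) ≤ ((k + (m+1) : ℕ) : ℝ) := by exact_mod_cast Nat.le_add_left 1 (k + m)
    calc r ^ (k + (m+1)) / ((k + (m+1) : ℕ) : ℝ) ≤ r ^ (k + (m+1)) / 1 := by gcongr
      _ = r ^ (k + (m+1)) := div_one _
  have hgsum : Summable (fun k : ℕ => r ^ (k + (m+1)) / ((k + (m+1) : ℕ) : ℝ)) :=
    Summable.of_nonneg_of_le hgnn hgle ((summable_geometric_of_lt_one hr0.le hr1).mul_right _)
  have hnsum : Summable (fun k : ℕ => ‖z^(k+(m+1)) / ((k+(m+1) : ℕ) : ℂ)‖) := by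
    refine hgsum.congr fun k => (hnorm k).symm
  calc ‖∑' k : ℕ, z^(k+(m+1)) / ((k+(m+1) : ℕ) : ℂ)‖
      ≤ ∑' k : ℕ, ‖z^(k+(m+1)) / ((k+(m+1) : ℕ) : ℂ)‖ := norm_tsum_le_tsum_norm hnsum
    _ = ∑' k : ℕ, r^(k+(m+1)) / ((k+(m+1) : ℕ) : ℝ) := tsum_congr hnorm
    _ < _ := auxTail hC hm
end

section
/- Let m ≥ 1, r = e^{−1/m}, and |θ| ≤ 1/m^{3/2}. Then |1 − r·e^{iθ}|² ≤ 1/m², hence −ln|1 − r·e^{iθ}| ≥ ln m. -/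
open Real

set_option maxHeartbeats 1000000

lemma exp_neg_bounds {x : ℝ} (h0 : 0 ≤ x) (h1 : x ≤ 1) :
    1 - x + x^2/2 - x^3/6 ≤ Real.exp (-x) ∧ Real.exp (-x) ≤ 1 - x + x^2/2 := by
  have habs : |(-x)| ≤ 1 := by rw [abs_neg, abs_of_nonneg h0]; exact h1
  have h := Real.exp_bound habs (n := 5) (by norm_num)
  have hsum : ∑ i ∈ Finset.range 5, (-x) ^ i / (i.factorial : ℝ)
      = 1 - x + x^2/2 - x^3/6 + x^4/24 := by
    simp [Finset.sum_range_succ, Nat.factorial]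
    ring
  rw [hsum, abs_neg, abs_of_nonneg h0] at h
  have h2 : |Real.exp (-x) - (1 - x + x^2/2 - x^3/6 + x^4/24)| ≤ x^5/100 := by
    refine h.trans (le_of_eq ?_)
    norm_num [Nat.factorial]
    ring
  rw [abs_le] at h2
  constructor
  · nlinarith [pow_nonneg h0 4, pow_nonneg h0 5,
      pow_le_pow_of_le_one h0 h1 (show 4 ≤ 5 by norm_num)]
  · nlinarith [pow_nonneg h0 3, pow_nonneg h0 4, pow_nonneg h0 5,
      pow_le_pow_of_le_one h0 h1 (show 3 ≤ 4 by norm_num),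
      pow_le_pow_of_le_one h0 h1 (show 3 ≤ 5 by norm_num)]

lemma abs_one_sub_mul_exp_sq (s t : ℝ) :
    ‖(1 - (s:ℂ) * Complex.exp (Complex.I * t))‖ ^ 2
      = (1 - s * Real.cos t)^2 + (s * Real.sin t)^2 := by
  rw [mul_comm Complex.I (t:ℂ), Complex.exp_mul_I, Complex.sq_norm, Complex.normSq_apply]
  simp [Complex.cos_ofReal_re, Complex.sin_ofReal_re]
  ring

theorem stmt12 (m : ℕ) (hm : 1 ≤ m) (θ : ℝ) (hθ : |θ| ≤ 1 / (m:ℝ) ^ ((3:ℝ)/2)) :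
    ‖(1 - (Real.exp (-1/(m:ℝ)) : ℂ) * Complex.exp (Complex.I * θ))‖ ^ 2
      ≤ 1 / (m:ℝ)^2 ∧
    Real.log m
      ≤ -Real.log (‖
          (1 - (Real.exp (-1/(m:ℝ)) : ℂ) * Complex.exp (Complex.I * θ))‖) := by
  have hm1 : (1:ℝ) ≤ (m:ℝ) := by exact_mod_cast hm
  have hm0 : (0:ℝ) < (m:ℝ) := by linarith
  set x : ℝ := 1/(m:ℝ) with hxdef
  have hx0 : 0 < x := by positivity
  have hx1 : x ≤ 1 := by rw [hxdef, div_le_one hm0]; exact hm1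
  have hneg : -1/(m:ℝ) = -x := by rw [hxdef]; ring
  set r : ℝ := Real.exp (-x) with hrdef
  have hr0 : 0 < r := Real.exp_pos _
  obtain ⟨hrlb, hrub⟩ := exp_neg_bounds hx0.le hx1
  rw [← hrdef] at hrlb hrub
  -- θ² ≤ x³
  have hθ2 : θ^2 ≤ x^3 := by
    have hpow : ((m:ℝ) ^ ((3:ℝ)/2))^2 = (m:ℝ)^3 := by
      rw [← Real.rpow_natCast ((m:ℝ) ^ ((3:ℝ)/2)) 2, ← Real.rpow_mul hm0.le,
        show (3:ℝ)/2 * ((2:ℕ):ℝ) = ((3:ℕ):ℝ) by push_cast; ring, Real.rpow_natCast]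
    have h1 : θ^2 ≤ (1 / (m:ℝ) ^ ((3:ℝ)/2))^2 := by
      rw [← sq_abs θ]
      exact pow_le_pow_left₀ (abs_nonneg θ) hθ 2
    calc θ^2 ≤ (1 / (m:ℝ) ^ ((3:ℝ)/2))^2 := h1
      _ = 1 / (m:ℝ)^3 := by rw [div_pow, one_pow, hpow]
      _ = x^3 := by rw [hxdef]; ring
  have habs : ‖(1 - (Real.exp (-1/(m:ℝ)) : ℂ) * Complex.exp (Complex.I * θ))‖ ^ 2
      = (1 - r * Real.cos θ)^2 + (r * Real.sin θ)^2 := by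
    rw [hneg, abs_one_sub_mul_exp_sq, hrdef]
  have hcos : 1 - θ^2/2 ≤ Real.cos θ := Real.one_sub_sq_div_two_le_cos
  have key : (1 - r * Real.cos θ)^2 + (r * Real.sin θ)^2 ≤ x^2 := by
    have hsc : Real.sin θ^2 + Real.cos θ^2 = 1 := Real.sin_sq_add_cos_sq θ
    have step1 : (1 - r * Real.cos θ)^2 + (r * Real.sin θ)^2
        = (1-r)^2 + 2*r*(1 - Real.cos θ) := by nlinarith [hsc]
    have step2 : (1-r)^2 + 2*r*(1 - Real.cos θ) ≤ (1-r)^2 + r * θ^2 := by nlinarith [hr0]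
    have step3 : (1-r)^2 + r * θ^2 ≤ (1-r)^2 + r * x^3 := by nlinarith [hr0]
    have step4 : (1-r)^2 + r * x^3 ≤ x^2 := by
      have e2 : 0 ≤ x - x^2/2 := by nlinarith
      have e1 : 1 - r ≤ x - x^2/2 + x^3/6 := by linarith
      have e3 : x - x^2/2 ≤ 1 - r := by linarith
      have e4 : (1-r)^2 ≤ (x - x^2/2 + x^3/6)^2 := by
        apply mul_self_le_mul_self (by linarith) e1 |>.trans_eq' (by ring) |>.trans_eq (by ring)
      have e5 : r * x^3 ≤ (1 - x + x^2/2) * x^3 := by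
        apply mul_le_mul_of_nonneg_right hrub (by positivity)
      have e6 : (x - x^2/2 + x^3/6)^2 + (1 - x + x^2/2) * x^3 ≤ x^2 := by
        nlinarith [pow_nonneg hx0.le 4,
          pow_le_pow_of_le_one hx0.le hx1 (show 4 ≤ 5 by norm_num),
          pow_le_pow_of_le_one hx0.le hx1 (show 4 ≤ 6 by norm_num)]
      linarith
    linarith
  have hx2 : x^2 = 1/(m:ℝ)^2 := by rw [hxdef]; ring
  have first : ‖(1 - (Real.exp (-1/(m:ℝ)) : ℂ) * Complex.exp (Complex.I * θ))‖ ^ 2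
      ≤ 1 / (m:ℝ)^2 := by rw [habs, ← hx2]; exact key
  refine ⟨first, ?_⟩
  set A := ‖(1 - (Real.exp (-1/(m:ℝ)) : ℂ) * Complex.exp (Complex.I * θ))‖ with hA
  have hA0 : 0 ≤ A := norm_nonneg _
  have hA2 : A^2 ≤ x^2 := by rw [hx2]; exact first
  have hAle : A ≤ x := by nlinarith [hA2, hA0, hx0]
  have hApos : 0 < A := by
    have hr1 : r < 1 := by rw [hrdef, Real.exp_lt_one_iff]; linarith
    have h1 : (1-r)^2 ≤ A^2 := by
      rw [habs]
      nlinarith [Real.sin_sq_add_cos_sq θ,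
        mul_nonneg hr0.le (by linarith [Real.cos_le_one θ] : (0:ℝ) ≤ 1 - Real.cos θ)]
    nlinarith [h1, hA0, hr1]
  have hmA : (m:ℝ) ≤ A⁻¹ := by
    rw [← one_div, le_div_iff₀ hApos]
    calc (m:ℝ) * A ≤ (m:ℝ) * (1/(m:ℝ)) := by
          exact mul_le_mul_of_nonneg_left (by rw [hxdef] at hAle; exact hAle) hm0.le
      _ = 1 := by field_simp
  have hlog : Real.log (m:ℝ) ≤ Real.log A⁻¹ := Real.log_le_log hm0 hmA
  rwa [Real.log_inv] at hlog
end

section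
/- With a_{m,t} = e^{−t/m} for t ≤ m and J_m ≥ 2π·m^{3/2}, the kernel S_m(e^{iθ}) = ∑_{t=1}^m a_{m,t} e^{itθ}/t satisfies lim_{m→∞} S_m(e^{2πi/J_m}) / S_m(1) = 1. -/
lemma norm_cexp_mul_I_sub_one_le (x : ℝ) (hx : 0 ≤ x) :
    ‖Complex.exp ((x : ℂ) * Complex.I) - 1‖ ≤ x := by
  rw [Complex.exp_mul_I, ← Complex.ofReal_cos, ← Complex.ofReal_sin]
  have h : (Real.cos x : ℂ) + (Real.sin x : ℂ) * Complex.I - 1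
      = ((Real.cos x - 1 : ℝ) : ℂ) + ((Real.sin x : ℝ) : ℂ) * Complex.I := by
    push_cast; ring
  rw [h, Complex.norm_add_mul_I]
  have h1 : (Real.cos x - 1) ^ 2 + Real.sin x ^ 2 ≤ x ^ 2 := by
    nlinarith [Real.cos_sq_add_sin_sq x, Real.one_sub_sq_div_two_le_cos (x := x)]
  calc Real.sqrt ((Real.cos x - 1) ^ 2 + Real.sin x ^ 2)
      ≤ Real.sqrt (x ^ 2) := Real.sqrt_le_sqrt h1
    _ = |x| := Real.sqrt_sq_eq_abs x
    _ = x := abs_of_nonneg hx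

theorem stmt14 (J : ℕ → ℝ) (hJ : ∀ m : ℕ, 1 ≤ m → 2*Real.pi*(m:ℝ)^((3:ℝ)/2) ≤ J m) :
    Filter.Tendsto (fun m : ℕ =>
        (∑ t ∈ Finset.Icc 1 m, (Real.exp (-(t:ℝ)/m) : ℂ)
            * Complex.exp (Complex.I * t * (2*Real.pi / J m)) / t)
        / (∑ t ∈ Finset.Icc 1 m, (Real.exp (-(t:ℝ)/m) : ℂ) / t))
      Filter.atTop (nhds 1) := by
  set f : ℕ → ℂ := fun m =>
        (∑ t ∈ Finset.Icc 1 m, (Real.exp (-(t:ℝ)/m) : ℂ)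
            * Complex.exp (Complex.I * t * (2*Real.pi / J m)) / t)
        / (∑ t ∈ Finset.Icc 1 m, (Real.exp (-(t:ℝ)/m) : ℂ) / t) with hf
  have key : ∀ m : ℕ, 1 ≤ m → ‖f m - 1‖ ≤ Real.exp 1 * (m:ℝ) ^ (-(1:ℝ)/2) := by
    intro m hm
    have hmpos : (0:ℝ) < m := by exact_mod_cast hm
    have hm32 : (0:ℝ) < (m:ℝ) ^ ((3:ℝ)/2) := Real.rpow_pos_of_pos hmpos _
    have hJpos : 0 < J m := lt_of_lt_of_le (by positivity) (hJ m hm)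
    set θ : ℝ := 2 * Real.pi / J m with hθ
    have hθ0 : 0 ≤ θ := by positivity
    have hθle : θ ≤ ((m:ℝ) ^ ((3:ℝ)/2))⁻¹ := by
      rw [hθ, inv_eq_one_div, div_le_div_iff₀ hJpos hm32]
      nlinarith [hJ m hm]
    set Sr : ℝ := ∑ t ∈ Finset.Icc 1 m, Real.exp (-(t:ℝ)/m) / t with hSr
    have hScast : (∑ t ∈ Finset.Icc 1 m, (Real.exp (-(t:ℝ)/m) : ℂ) / t) = (Sr : ℂ) := by
      rw [hSr, Complex.ofReal_sum]
      exact Finset.sum_congr rfl fun t _ => by push_cast; ring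
    have hSr_lb : Real.exp (-1) ≤ Sr := by
      have h1mem : 1 ∈ Finset.Icc 1 m := by simp [hm]
      have hsum := Finset.single_le_sum
        (f := fun t : ℕ => Real.exp (-(t:ℝ)/m) / t)
        (fun t _ => by positivity) h1mem
      have h1 : Real.exp (-1) ≤ Real.exp (-((1:ℕ):ℝ)/m) / ((1:ℕ):ℝ) := by
        push_cast
        rw [div_one]
        apply Real.exp_le_exp.2
        rw [neg_div]
        have : 1 / (m:ℝ) ≤ 1 := by
          rw [div_le_one hmpos]; exact_mod_cast hm
        linarith
      exact le_trans h1 hsum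
    have hSr_pos : 0 < Sr := lt_of_lt_of_le (Real.exp_pos _) hSr_lb
    set N : ℂ := ∑ t ∈ Finset.Icc 1 m, (Real.exp (-(t:ℝ)/m) : ℂ)
            * Complex.exp (Complex.I * t * (2*Real.pi / J m)) / t with hN
    have hdiff : ‖N - (Sr:ℂ)‖ ≤ (m:ℝ) * θ := by
      rw [← hScast, hN, ← Finset.sum_sub_distrib]
      calc ‖∑ t ∈ Finset.Icc 1 m,
              ((Real.exp (-(t:ℝ)/m) : ℂ) * Complex.exp (Complex.I * t * (2*Real.pi / J m)) / t
                - (Real.exp (-(t:ℝ)/m) : ℂ) / t)‖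
          ≤ ∑ t ∈ Finset.Icc 1 m,
              ‖(Real.exp (-(t:ℝ)/m) : ℂ) * Complex.exp (Complex.I * t * (2*Real.pi / J m)) / t
                - (Real.exp (-(t:ℝ)/m) : ℂ) / t‖ := norm_sum_le _ _
        _ ≤ ∑ t ∈ Finset.Icc 1 m, θ := by
            apply Finset.sum_le_sum
            intro t ht
            have ht1 : 1 ≤ t := (Finset.mem_Icc.mp ht).1
            have htpos : (0:ℝ) < t := by exact_mod_cast ht1
            have harg : Complex.I * t * (2*Real.pi / J m) = (((t:ℝ) * θ : ℝ) : ℂ) * Complex.I := by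
              rw [hθ]; push_cast; ring
            have hterm : (Real.exp (-(t:ℝ)/m) : ℂ) * Complex.exp (Complex.I * t * (2*Real.pi / J m)) / t
                - (Real.exp (-(t:ℝ)/m) : ℂ) / t
                = (Real.exp (-(t:ℝ)/m) : ℂ) * (Complex.exp ((((t:ℝ) * θ : ℝ) : ℂ) * Complex.I) - 1) / t := by
              rw [harg]; ring
            rw [hterm]
            rw [norm_div, norm_mul, Complex.norm_real, Real.norm_eq_abs,
              abs_of_nonneg (Real.exp_nonneg _)]
            have hz : ‖Complex.exp ((((t:ℝ) * θ : ℝ) : ℂ) * Complex.I) - 1‖ ≤ (t:ℝ) * θ :=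
              norm_cexp_mul_I_sub_one_le _ (by positivity)
            have hexple : Real.exp (-(t:ℝ)/m) ≤ 1 := by
              apply Real.exp_le_one_iff.mpr
              exact div_nonpos_of_nonpos_of_nonneg (neg_nonpos.mpr t.cast_nonneg) m.cast_nonneg
            have hnt : ‖(t:ℂ)‖ = (t:ℝ) := by
              rw [Complex.norm_natCast]
            rw [hnt]
            calc Real.exp (-(t:ℝ)/m) * ‖Complex.exp ((((t:ℝ) * θ : ℝ) : ℂ) * Complex.I) - 1‖ / t
                ≤ 1 * ((t:ℝ) * θ) / t := by gcongr
              _ = θ := by field_simp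
        _ = (m:ℝ) * θ := by
            rw [Finset.sum_const, Nat.card_Icc]
            simp [nsmul_eq_mul]
    have hmθ : (m:ℝ) * θ ≤ (m:ℝ) ^ (-(1:ℝ)/2) := by
      calc (m:ℝ) * θ ≤ (m:ℝ) * ((m:ℝ) ^ ((3:ℝ)/2))⁻¹ := by gcongr
        _ = (m:ℝ) ^ ((1:ℝ)) * (m:ℝ) ^ (-((3:ℝ)/2)) := by
            rw [Real.rpow_one, Real.rpow_neg hmpos.le]
        _ = (m:ℝ) ^ (-(1:ℝ)/2) := by
            rw [← Real.rpow_add hmpos]; norm_num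
    have hfne : (Sr : ℂ) ≠ 0 := by
      exact_mod_cast Complex.ofReal_ne_zero.mpr (ne_of_gt hSr_pos)
    have hfeq : f m - 1 = (N - Sr) / Sr := by
      rw [hf]
      simp only
      rw [hScast, div_sub_one hfne]
    rw [hfeq, norm_div, Complex.norm_real, Real.norm_eq_abs, abs_of_pos hSr_pos]
    calc ‖N - (Sr:ℂ)‖ / Sr ≤ ((m:ℝ) ^ (-(1:ℝ)/2)) / Real.exp (-1) := by
          apply div_le_div₀ (by positivity) (le_trans hdiff hmθ) (Real.exp_pos _) hSr_lb
      _ = Real.exp 1 * (m:ℝ) ^ (-(1:ℝ)/2) := by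
          rw [Real.exp_neg, div_eq_mul_inv, inv_inv, mul_comm]
  have hg0 : Filter.Tendsto (fun m : ℕ => Real.exp 1 * (m:ℝ) ^ (-(1:ℝ)/2))
      Filter.atTop (nhds 0) := by
    have h1 : Filter.Tendsto (fun m : ℕ => (m:ℝ) ^ (-(1:ℝ)/2)) Filter.atTop (nhds 0) := by
      have := (tendsto_rpow_neg_atTop (y := (1:ℝ)/2) (by norm_num)).comp
        (tendsto_natCast_atTop_atTop (R := ℝ))
      convert this using 2 with m
      norm_num
    simpa using h1.const_mul (Real.exp 1)
  have h0 : Filter.Tendsto (fun m => f m - 1) Filter.atTop (nhds 0) := by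
    apply squeeze_zero_norm' _ hg0
    filter_upwards [Filter.eventually_ge_atTop 1] with m hm
    exact key m hm
  have := h0.add_const 1
  simpa using this
end

section
/- Let m ≥ 3, r = e^{−1/m}, and |θ| ≤ π/3. Then the truncated Poisson kernel S_m(e^{iθ}) = ∑_{t=1}^m e^{−t/m} e^{itθ}/t satisfies |S_m(e^{iθ})| ≥ −ln|1 − e^{−1/m + iθ}| − e^{−1}. -/
theorem stmt19 (m : ℕ) (hm : 3 ≤ m) (θ : ℝ) (hθ : |θ| ≤ Real.pi/3) :
    -Real.log (‖1 - Complex.exp (-1/(m:ℂ) + Complex.I * θ)‖) - Real.exp (-1)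
      ≤ ‖∑ t ∈ Finset.Icc 1 m,
          (Real.exp (-(t:ℝ)/m) : ℂ) * Complex.exp (Complex.I * t * θ) / t‖ := by
  have hm0 : (0:ℝ) < m := by exact_mod_cast Nat.lt_of_lt_of_le (by norm_num) hm
  set w : ℂ := -1/(m:ℂ) + Complex.I * θ with hw
  set z : ℂ := Complex.exp w with hz
  set r : ℝ := Real.exp (-1/m) with hr
  have hwre : w.re = -1/m := by
    have hmne : (m:ℝ) ≠ 0 := ne_of_gt hm0
    simp [hw, Complex.div_re, Complex.normSq]
    field_simp
  have habs : ‖z‖ = r := by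
    rw [hz, Complex.norm_exp, hwre]
  have hr1 : r < 1 := by
    rw [hr]; apply Real.exp_lt_one_iff.2
    rw [neg_div, neg_lt_zero]
    positivity
  have hr0 : 0 < r := Real.exp_pos _
  have hzn : ‖z‖ < 1 := by rw [habs]; exact hr1
  -- rewrite the sum
  have hterm : ∀ t ∈ Finset.Icc 1 m,
      (Real.exp (-(t:ℝ)/m) : ℂ) * Complex.exp (Complex.I * t * θ) / t
        = z ^ t / t := by
    intro t _
    have : z ^ t = Complex.exp ((t:ℂ) * w) := (Complex.exp_nat_mul w t).symm
    rw [this, hw, mul_add]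
    have h1 : (t:ℂ) * (-1/(m:ℂ)) = ((-(t:ℝ)/m : ℝ) : ℂ) := by push_cast; ring
    rw [Complex.exp_add, h1, ← Complex.ofReal_exp]
    ring_nf
  rw [Finset.sum_congr rfl hterm]
  set S : ℂ := ∑ t ∈ Finset.Icc 1 m, z ^ t / t with hS
  set L : ℂ := -Complex.log (1 - z) with hL
  have hrange : ∑ n ∈ Finset.range (m+1), z ^ n / n = S := by
    have hins : Finset.range (m+1) = insert 0 (Finset.Icc 1 m) := by
      ext x; simp [Nat.lt_succ_iff]; omega
    rw [hins, Finset.sum_insert (by simp)]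
    simp [hS]
  have hsum := Complex.hasSum_taylorSeries_neg_log hzn
  have h2 : HasSum (fun n : ℕ => z ^ (n + (m+1)) / ((n + (m+1) : ℕ) : ℂ)) (L - S) := by
    have := (hasSum_nat_add_iff' (f := fun n : ℕ => z ^ n / n) (m+1)).2 hsum
    rwa [hrange, ← hL] at this
  -- bound the tail
  have hbound : ∀ n : ℕ, ‖z ^ (n + (m+1)) / ((n + (m+1) : ℕ) : ℂ)‖
      ≤ r ^ (m+1) / (m+1) * r ^ n := by
    intro n
    rw [norm_div, norm_pow, habs]
    have hnm : (0:ℝ) < ((n + (m+1) : ℕ) : ℝ) := by positivity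
    rw [Complex.norm_natCast]
    rw [div_le_iff₀ hnm]
    have h1 : r ^ (n + (m+1)) = r ^ (m+1) * r ^ n := by ring
    rw [h1]
    have h2 : ((m:ℝ)+1) ≤ ((n + (m+1) : ℕ) : ℝ) := by push_cast; linarith [Nat.cast_nonneg (α := ℝ) n]
    calc r ^ (m+1) * r ^ n = r ^ (m+1) / (m+1) * r ^ n * ((m:ℝ)+1) := by
          field_simp
      _ ≤ r ^ (m+1) / (m+1) * r ^ n * ((n + (m+1) : ℕ) : ℝ) := by
          apply mul_le_mul_of_nonneg_left h2; positivity
  have hgsum : HasSum (fun n : ℕ => r ^ (m+1) / (m+1) * r ^ n)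
      (r ^ (m+1) / (m+1) * (1 - r)⁻¹) :=
    (hasSum_geometric_of_lt_one hr0.le hr1).mul_left _
  have htail : ‖L - S‖ ≤ r ^ (m+1) / (m+1) * (1 - r)⁻¹ := by
    have hsummable : Summable (fun n : ℕ => ‖z ^ (n + (m+1)) / ((n + (m+1) : ℕ) : ℂ)‖) :=
      Summable.of_nonneg_of_le (fun n => norm_nonneg _) hbound hgsum.summable
    calc ‖L - S‖ = ‖∑' n : ℕ, z ^ (n + (m+1)) / ((n + (m+1) : ℕ) : ℂ)‖ := by rw [h2.tsum_eq]
      _ ≤ ∑' n : ℕ, ‖z ^ (n + (m+1)) / ((n + (m+1) : ℕ) : ℂ)‖ := norm_tsum_le_tsum_norm hsummable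
      _ ≤ ∑' n : ℕ, r ^ (m+1) / (m+1) * r ^ n := Summable.tsum_le_tsum hbound hsummable hgsum.summable
      _ = r ^ (m+1) / (m+1) * (1 - r)⁻¹ := hgsum.tsum_eq
  -- numeric bound: tail ≤ e⁻¹
  have hnum : r ^ (m+1) / (m+1) * (1 - r)⁻¹ ≤ Real.exp (-1) := by
    have h1r : 0 < 1 - r := by linarith
    have hrpow : r ^ (m+1) = Real.exp (-1) * r := by
      rw [hr, ← Real.exp_nat_mul, ← Real.exp_add]
      congr 1
      push_cast
      field_simp
      ring
    have hkey : ((m:ℝ) + 2) * r ≤ (m:ℝ) + 1 := by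
      have he : 1 + 1/(m:ℝ) ≤ Real.exp (1/m) := by
        have := Real.add_one_le_exp (1/(m:ℝ)); linarith
      have h3 : ((m:ℝ) + 2) ≤ ((m:ℝ) + 1) * Real.exp (1/m) := by
        calc ((m:ℝ) + 2) ≤ ((m:ℝ) + 1) * (1 + 1/m) := by
              have hexp : ((m:ℝ) + 1) * (1 + 1/m) = (m:ℝ) + 2 + 1/m := by
                field_simp; ring
              have hpos : (0:ℝ) < 1/m := by positivity
              linarith
          _ ≤ ((m:ℝ) + 1) * Real.exp (1/m) := by
              apply mul_le_mul_of_nonneg_left he; positivity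
      have hre : Real.exp (1/m) * r = 1 := by
        rw [hr, ← Real.exp_add, ← Real.exp_zero]; congr 1; ring
      calc ((m:ℝ) + 2) * r ≤ ((m:ℝ) + 1) * Real.exp (1/m) * r := by
            apply mul_le_mul_of_nonneg_right h3 hr0.le
        _ = ((m:ℝ) + 1) * (Real.exp (1/m) * r) := by ring
        _ = (m:ℝ) + 1 := by rw [hre, mul_one]
    have e1 : r ^ (m+1) / ((m:ℝ)+1) * (1-r)⁻¹ = (Real.exp (-1) * r) / (((m:ℝ)+1) * (1-r)) := by
      rw [hrpow]; field_simp
    rw [e1, div_le_iff₀ (by positivity)]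
    have h4 : r ≤ ((m:ℝ)+1) * (1-r) := by nlinarith
    nlinarith [mul_le_mul_of_nonneg_left h4 (le_of_lt (Real.exp_pos (-1)))]
  -- conclude
  have hTe : ‖L - S‖ ≤ Real.exp (-1) := htail.trans hnum
  have hLS : ‖L‖ - ‖L - S‖ ≤ ‖S‖ := by
    have := norm_sub_norm_le L (L - S)
    simpa using this
  have hLlb : -Real.log (‖1 - z‖) ≤ ‖L‖ := by
    rw [hL, norm_neg]
    calc -Real.log (‖1 - z‖) ≤ |Real.log (‖1 - z‖)| := neg_le_abs _
      _ = |(Complex.log (1 - z)).re| := by rw [Complex.log_re]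
      _ ≤ ‖Complex.log (1 - z)‖ := Complex.abs_re_le_norm _
  linarith
end
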